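/- Let M > 0 and let h₁, h₂ : ℝ → ℝ₊ be measurable functions with h_i(z) ≤ C z^{-2} for all z ≥ M and some C > 0, and suppose h₁, h₂ are bounded on every set {z : 1/n ≤ |z| ≤ n}. Then for every α > 0 and every q with 0 < q < r̄ (where r̄ > 0 is fixed), one has ∫∫ 1_{|x−z| ≤ Δ^{r̄}}·1_{x > α}·1_{z > α}·h₁(x)h₂(z) dx dz = O(Δ^{r̄}) as Δ → 0; in particular this double integral is o(Δ^q). -/

import Mathlib

open MeasureTheory ENNReal Set

/-- The tail double-integral estimate from the proof of Proposition 6.10 of the paper: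
if `h₁, h₂` are bounded on annuli `{1/n ≤ |z| ≤ n}` and satisfy `h_i(z) ≤ C z⁻²` for
`z ≥ M`, then `∫∫ 1_{|x−z| ≤ Δ^rbar} 1_{x>α} 1_{z>α} h₁(x)h₂(z) dx dz = O(Δ^rbar)` as
`Δ → 0`, and in particular this integral is `o(Δ^q)` for every `0 < q < rbar`. -/
theorem double_integral_tail_bound
    (M C rbar : ℝ) (hM : 0 < M) (hC : 0 < C) (hr : 0 < rbar)
    (h₁ h₂ : ℝ → ℝ) (hm1 : Measurable h₁) (hm2 : Measurable h₂)
    (hpos1 : ∀ z : ℝ, 0 ≤ h₁ z) (hpos2 : ∀ z : ℝ, 0 ≤ h₂ z)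
    (hb1 : ∀ z : ℝ, M ≤ z → h₁ z ≤ C / z ^ 2)
    (hb2 : ∀ z : ℝ, M ≤ z → h₂ z ≤ C / z ^ 2)
    (hbdd : ∀ n : ℕ, 0 < n → ∃ B : ℝ, ∀ z : ℝ, 1 / (n : ℝ) ≤ |z| → |z| ≤ (n : ℝ) →
      h₁ z ≤ B ∧ h₂ z ≤ B)
    (α : ℝ) (hα : 0 < α)
    (I : ℝ → ℝ≥0∞)
    (hI : ∀ Δ : ℝ, I Δ = ∫⁻ x : ℝ, ∫⁻ z : ℝ, ENNReal.ofReal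
        ((if |x - z| ≤ Δ ^ rbar then (1 : ℝ) else 0) *
         (if α < x then (1 : ℝ) else 0) *
         (if α < z then (1 : ℝ) else 0) * h₁ x * h₂ z)) :
    (∃ K > (0 : ℝ), ∃ Δ₀ > (0 : ℝ), ∀ Δ : ℝ, 0 < Δ → Δ < Δ₀ →
        I Δ ≤ ENNReal.ofReal (K * Δ ^ rbar)) ∧
    (∀ q : ℝ, 0 < q → q < rbar → ∀ ε > (0 : ℝ), ∃ Δ₀ > (0 : ℝ), ∀ Δ : ℝ, 0 < Δ → Δ < Δ₀ →
        I Δ ≤ ENNReal.ofReal (ε * Δ ^ q)) := by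
  -- choose a uniform bound B' for h₁, h₂ on (α, ∞)
  obtain ⟨n, hn⟩ := exists_nat_gt (max M (1/α))
  have hn0 : 0 < n := by
    by_contra h
    push_neg at h
    interval_cases n
    simp only [Nat.cast_zero] at hn
    have := lt_of_le_of_lt (le_max_left M (1/α)) hn
    linarith
  obtain ⟨B, hB⟩ := hbdd n hn0
  set B' : ℝ := max (max B (C / M ^ 2)) 0 with hB'def
  have hB'0 : 0 ≤ B' := le_max_right _ _
  have key : ∀ z : ℝ, α < z → h₁ z ≤ B' ∧ h₂ z ≤ B' := by
    intro z hz
    have hz0 : 0 < z := hα.trans hz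
    rcases le_or_gt z M with hzM | hzM
    · have h1 : 1 / (n : ℝ) ≤ |z| := by
        rw [abs_of_pos hz0]
        have hnα : 1 / α < n := lt_of_le_of_lt (le_max_right M (1/α)) hn
        have hn' : 0 < (n : ℝ) := by exact_mod_cast hn0
        rw [div_le_iff₀ hn']
        have h1n : 1 < (n:ℝ) * α := by
          rw [div_lt_iff₀ hα] at hnα; linarith
        nlinarith
      have h2 : |z| ≤ (n : ℝ) := by
        rw [abs_of_pos hz0]
        exact hzM.trans (le_of_lt (lt_of_le_of_lt (le_max_left M (1/α)) hn))
      obtain ⟨ha, hb⟩ := hB z h1 h2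
      constructor <;> [exact ha.trans ((le_max_left _ _).trans (le_max_left _ _));
        exact hb.trans ((le_max_left _ _).trans (le_max_left _ _))]
    · have hd : C / z ^ 2 ≤ C / M ^ 2 := by
        apply div_le_div_of_nonneg_left hC.le (by positivity)
        nlinarith
      constructor
      · exact (hb1 z hzM.le).trans (hd.trans ((le_max_right _ _).trans (le_max_left _ _)))
      · exact (hb2 z hzM.le).trans (hd.trans ((le_max_right _ _).trans (le_max_left _ _)))
  -- the marginal integral A is finite
  set g : ℝ → ℝ := fun x => (if α < x then (1:ℝ) else 0) * h₁ x with hgdef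
  have hg0 : ∀ x, 0 ≤ g x := by
    intro x; dsimp [g]; split <;> simp [hpos1 x]
  set A : ℝ≥0∞ := ∫⁻ x : ℝ, ENNReal.ofReal (g x) with hAdef
  have hJ : IntegrableOn (fun x : ℝ => C / x ^ 2) (Ioi M) := by
    have h : IntegrableOn (fun x : ℝ => C * x ^ (-2 : ℝ)) (Ioi M) :=
      (integrableOn_Ioi_rpow_of_lt (a := (-2 : ℝ)) (by norm_num) hM).const_mul C
    refine h.congr_fun (fun x hx => ?_) measurableSet_Ioi
    have hx0 : 0 < x := hM.trans hx
    have hx2 : x ^ ((-2 : ℝ)) = (x ^ 2)⁻¹ := by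
      rw [Real.rpow_neg hx0.le]
      congr 1
      rw [← Real.rpow_natCast x 2]
      norm_num
    beta_reduce
    rw [hx2, div_eq_mul_inv]
  have hAfin : A < ⊤ := by
    have hbound : ∀ x : ℝ, ENNReal.ofReal (g x) ≤
        (Ioc α M).indicator (fun _ => ENNReal.ofReal B') x +
        (Ioi M).indicator (fun x => ENNReal.ofReal (C / x ^ 2)) x := by
      intro x
      rcases le_or_gt x α with hxα | hxα
      · have : g x = 0 := by dsimp [g]; rw [if_neg (not_lt.mpr hxα)]; ring
        simp [this]
      rcases le_or_gt x M with hxM | hxM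
      · have : g x = h₁ x := by dsimp [g]; rw [if_pos hxα]; ring
        rw [this, indicator_of_mem (mem_Ioc.mpr ⟨hxα, hxM⟩)]
        exact le_add_right (ENNReal.ofReal_le_ofReal (key x hxα).1)
      · have : g x = h₁ x := by dsimp [g]; rw [if_pos hxα]; ring
        rw [this, indicator_of_mem (mem_Ioi.mpr hxM)]
        exact le_add_left (ENNReal.ofReal_le_ofReal (hb1 x hxM.le))
    calc A ≤ ∫⁻ x : ℝ, ((Ioc α M).indicator (fun _ => ENNReal.ofReal B') x +
        (Ioi M).indicator (fun x => ENNReal.ofReal (C / x ^ 2)) x) :=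
          lintegral_mono hbound
      _ = ENNReal.ofReal B' * volume (Ioc α M) +
          ∫⁻ x in Ioi M, ENNReal.ofReal (C / x ^ 2) := by
          rw [lintegral_add_left ((measurable_const).indicator measurableSet_Ioc)]
          rw [lintegral_indicator measurableSet_Ioc _, lintegral_indicator measurableSet_Ioi _]
          simp [mul_comm]
      _ < ⊤ := by
          apply ENNReal.add_lt_top.mpr
          constructor
          · exact ENNReal.mul_lt_top ENNReal.ofReal_lt_top (by simp [Real.volume_Ioc])
          · calc (∫⁻ x in Ioi M, ENNReal.ofReal (C / x ^ 2))
                ≤ ∫⁻ x in Ioi M, ‖C / x ^ 2‖ₑ :=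
                  lintegral_mono fun x => Real.ofReal_le_enorm _
              _ < ⊤ := hJ.2
  set A₀ : ℝ := A.toReal with hA₀def
  have hA₀0 : 0 ≤ A₀ := ENNReal.toReal_nonneg
  have hAeq : A = ENNReal.ofReal A₀ := (ENNReal.ofReal_toReal hAfin.ne).symm
  set K : ℝ := 2 * B' * A₀ + 1 with hKdef
  have hK0 : 0 < K := by positivity
  -- main estimate
  have main : ∀ Δ : ℝ, 0 < Δ → I Δ ≤ ENNReal.ofReal (K * Δ ^ rbar) := by
    intro Δ hΔ
    have hδ : 0 < Δ ^ rbar := Real.rpow_pos_of_pos hΔ rbar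
    set δ := Δ ^ rbar with hδdef
    rw [hI Δ]
    have step1 : ∀ x z : ℝ,
        ENNReal.ofReal ((if |x - z| ≤ δ then (1 : ℝ) else 0) *
          (if α < x then (1 : ℝ) else 0) * (if α < z then (1 : ℝ) else 0) * h₁ x * h₂ z)
        ≤ (ENNReal.ofReal (g x) * ENNReal.ofReal B') *
          (Icc (x - δ) (x + δ)).indicator (fun _ => (1 : ℝ≥0∞)) z := by
      intro x z
      by_cases hmem : |x - z| ≤ δ
      · have hz : z ∈ Icc (x - δ) (x + δ) := by
          rw [abs_le] at hmem
          constructor <;> linarith [hmem.1, hmem.2]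
        rw [indicator_of_mem hz, mul_one, if_pos hmem]
        rw [← ENNReal.ofReal_mul (hg0 x)]
        apply ENNReal.ofReal_le_ofReal
        by_cases hzα : α < z
        · rw [if_pos hzα]
          dsimp [g]
          by_cases hxα : α < x
          · rw [if_pos hxα]
            have := (key z hzα).2
            nlinarith [hpos1 x, hpos2 z]
          · rw [if_neg hxα]
            have hL : (1:ℝ) * 0 * 1 * h₁ x * h₂ z = 0 := by ring
            have hR : (0:ℝ) * h₁ x * B' = 0 := by ring
            rw [hL, hR]
        · rw [if_neg hzα]
          have : (1:ℝ) * (if α < x then (1:ℝ) else 0) * 0 * h₁ x * h₂ z = 0 := by ring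
          rw [this]
          exact mul_nonneg (hg0 x) hB'0
      · rw [if_neg hmem]
        have : (0:ℝ) * (if α < x then (1:ℝ) else 0) * (if α < z then (1:ℝ) else 0)
            * h₁ x * h₂ z = 0 := by ring
        rw [this]
        simp
    calc (∫⁻ x : ℝ, ∫⁻ z : ℝ, ENNReal.ofReal
        ((if |x - z| ≤ δ then (1 : ℝ) else 0) *
         (if α < x then (1 : ℝ) else 0) *
         (if α < z then (1 : ℝ) else 0) * h₁ x * h₂ z))
        ≤ ∫⁻ x : ℝ, ∫⁻ z : ℝ, (ENNReal.ofReal (g x) * ENNReal.ofReal B') *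
          (Icc (x - δ) (x + δ)).indicator (fun _ => (1 : ℝ≥0∞)) z :=
          lintegral_mono fun x => lintegral_mono fun z => step1 x z
      _ = ∫⁻ x : ℝ, (ENNReal.ofReal (g x) * ENNReal.ofReal B') * volume (Icc (x - δ) (x + δ)) := by
          congr 1; ext x
          rw [lintegral_const_mul' _ _ (by finiteness)]
          congr 1
          rw [lintegral_indicator measurableSet_Icc _]
          simp
      _ = ∫⁻ x : ℝ, ENNReal.ofReal (g x) * ENNReal.ofReal (B' * (2 * δ)) := by
          congr 1; ext x
          rw [Real.volume_Icc, ENNReal.ofReal_mul hB'0, mul_assoc]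
          congr 2
          · congr 1; ring
      _ = A * ENNReal.ofReal (B' * (2 * δ)) := by
          rw [← lintegral_mul_const' _ _ (by finiteness)]
      _ ≤ ENNReal.ofReal (K * δ) := by
          rw [hAeq, ← ENNReal.ofReal_mul hA₀0]
          apply ENNReal.ofReal_le_ofReal
          have : A₀ * (B' * (2 * δ)) = (2 * B' * A₀) * δ := by ring
          rw [this, hKdef]
          nlinarith
  constructor
  · exact ⟨K, hK0, 1, one_pos, fun Δ hΔ _ => main Δ hΔ⟩
  · intro q hq hqr ε hε
    set Δ₀ : ℝ := min 1 ((ε / K) ^ (1 / (rbar - q))) with hΔ₀def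
    have hεK : 0 < ε / K := div_pos hε hK0
    have hΔ₀pos : 0 < Δ₀ := lt_min one_pos (Real.rpow_pos_of_pos hεK _)
    refine ⟨Δ₀, hΔ₀pos, fun Δ hΔ hΔlt => ?_⟩
    refine (main Δ hΔ).trans (ENNReal.ofReal_le_ofReal ?_)
    have hsub : 0 < rbar - q := by linarith
    have hΔlt' : Δ < (ε / K) ^ (1 / (rbar - q)) := lt_of_lt_of_le hΔlt (min_le_right _ _)
    have h1 : Δ ^ (rbar - q) < ε / K := by
      have := Real.rpow_lt_rpow (le_of_lt hΔ) hΔlt' hsub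
      rwa [← Real.rpow_mul hεK.le, one_div,
        inv_mul_cancel₀ hsub.ne', Real.rpow_one] at this
    have h2 : Δ ^ rbar = Δ ^ (rbar - q) * Δ ^ q := by
      rw [← Real.rpow_add hΔ]; ring_nf
    rw [h2]
    have hΔq : 0 < Δ ^ q := Real.rpow_pos_of_pos hΔ q
    calc K * (Δ ^ (rbar - q) * Δ ^ q) = (K * Δ ^ (rbar - q)) * Δ ^ q := by ring
      _ ≤ ε * Δ ^ q := by
          apply mul_le_mul_of_nonneg_right _ hΔq.le
          rw [div_eq_mul_inv] at h1
          nlinarith [mul_inv_cancel₀ hK0.ne', Real.rpow_pos_of_pos hΔ (rbar - q)]
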